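/- Let α ∈ (1,2) and γ ∈ (0, (2−α)/(α−1)). If φ is a comparison function for which there exist a > 0 and ε > 0 with φ(x) ≤ x − a·x^α for all x ∈ [0, ε], then the series Σ_{n≥1} n^γ · φ^[n](r) converges for every r ≥ 0. -/

import Mathlib

private lemma key_rpow_ineq (β x : ℝ) (hβ : 0 < β) (hx : 0 < x) :
    x ^ (-β) - (x+1) ^ (-β) ≤ β * x ^ (-(β+1)) := by
  have hx1 : (0:ℝ) < x + 1 := by linarith
  set y : ℝ := (x / (x+1)) ^ β with hy
  have hyd : (0:ℝ) < x / (x+1) := div_pos hx hx1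
  have hypos : 0 < y := Real.rpow_pos_of_pos hyd β
  have h1 : 1 - y ≤ -Real.log y := by
    have := Real.log_le_sub_one_of_pos hypos
    linarith
  have hlogy : Real.log y = β * Real.log (x / (x+1)) := Real.log_rpow hyd β
  have h2 : -Real.log y ≤ β * (1/x) := by
    rw [hlogy, Real.log_div (ne_of_gt hx) (ne_of_gt hx1)]
    have h3 : Real.log ((x+1)/x) ≤ (x+1)/x - 1 := Real.log_le_sub_one_of_pos (div_pos hx1 hx)
    rw [Real.log_div (ne_of_gt hx1) (ne_of_gt hx)] at h3
    have h4 : (x+1)/x - 1 = 1/x := by field_simp; ring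
    nlinarith [h3, h4]
  have hxy : x ^ (-β) * y = (x+1) ^ (-β) := by
    rw [hy, Real.div_rpow hx.le hx1.le, Real.rpow_neg hx.le, Real.rpow_neg hx1.le]
    field_simp
  have hxb : (0:ℝ) < x ^ (-β) := Real.rpow_pos_of_pos hx _
  have heq : x ^ (-(β+1)) = x ^ (-β) * (1/x) := by
    rw [show -(β+1) = -β + (-1) by ring, Real.rpow_add hx, Real.rpow_neg_one]
    ring
  calc x ^ (-β) - (x+1) ^ (-β) = x ^ (-β) * (1 - y) := by rw [mul_sub, mul_one, hxy]
    _ ≤ x ^ (-β) * (β * (1/x)) := by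
        apply mul_le_mul_of_nonneg_left _ hxb.le
        linarith
    _ = β * x ^ (-(β+1)) := by rw [heq]; ring

private lemma rpow_anti (β s t : ℝ) (hβ : 0 ≤ β) (hs : 0 < s) (hst : s ≤ t) :
    t ^ (-β) ≤ s ^ (-β) := by
  have ht : 0 < t := lt_of_lt_of_le hs hst
  rw [Real.rpow_neg hs.le, Real.rpow_neg ht.le]
  have h1 : s ^ β ≤ t ^ β := Real.rpow_le_rpow hs.le hst hβ
  have h2 : 0 < s ^ β := Real.rpow_pos_of_pos hs β
  exact inv_anti₀ h2 h1

theorem Gamma_alpha_subset_Gamma_gamma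
    (α γ : ℝ) (hα : α ∈ Set.Ioo (1 : ℝ) 2) (hγ : γ ∈ Set.Ioo (0 : ℝ) ((2 - α) / (α - 1)))
    (φ : ℝ → ℝ)
    (hφ_nonneg : ∀ r, 0 ≤ r → 0 ≤ φ r)
    (hφ_mono : ∀ x y, 0 ≤ x → x ≤ y → φ x ≤ φ y)
    (hφ_iter : ∀ r, 0 ≤ r → Filter.Tendsto (fun n => φ^[n] r) Filter.atTop (nhds 0))
    (a ε : ℝ) (ha : 0 < a) (hε : 0 < ε)
    (hφ_le : ∀ x ∈ Set.Icc (0 : ℝ) ε, φ x ≤ x - a * x ^ α) :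
    ∀ r : ℝ, 0 ≤ r → Summable (fun n : ℕ => (n : ℝ) ^ γ * φ^[n] r) := by
  intro r hr
  obtain ⟨hα1, hα2⟩ := hα
  obtain ⟨hγ0, hγlt⟩ := hγ
  have hα1' : (0:ℝ) < α - 1 := by linarith
  set β : ℝ := 1 / (α - 1) with hβdef
  have hβpos : 0 < β := by positivity
  have hβ1 : 1 < β := by
    rw [hβdef, lt_div_iff₀ hα1']; linarith
  have hγβ : γ - β < -1 := by
    have heq : (2 - α) / (α - 1) = β - 1 := by
      rw [hβdef]; field_simp; ring
    rw [heq] at hγlt; linarith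
  have hβα : β * α = β + 1 := by
    rw [hβdef]; field_simp; ring
  set b : ℝ := a * (α - 1) with hbdef
  have hbpos : 0 < b := by positivity
  have hab : a / b = β := by
    rw [hbdef, hβdef]; field_simp
  set c : ℝ := max 1 (ε ^ (-(1/β)) / b) with hcdef
  have hc1 : (1:ℝ) ≤ c := le_max_left _ _
  have hcpos : (0:ℝ) < c := lt_of_lt_of_le one_pos hc1
  have hbc : ε ^ (-(1/β)) ≤ b * c := by
    have h := le_max_right 1 (ε ^ (-(1/β)) / b)
    rw [div_le_iff₀ hbpos] at h
    calc ε ^ (-(1/β)) ≤ c * b := h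
      _ = b * c := mul_comm _ _
  have hεp : (0:ℝ) < ε ^ (-(1/β)) := Real.rpow_pos_of_pos hε _
  have hv0 : (b * c) ^ (-β) ≤ ε := by
    have h := rpow_anti β _ _ hβpos.le hεp hbc
    have heq2 : (ε ^ (-(1/β))) ^ (-β) = ε := by
      rw [← Real.rpow_mul hε.le, show -(1/β) * (-β) = 1 by field_simp, Real.rpow_one]
    rw [heq2] at h; exact h
  -- the comparison sequence
  set v : ℕ → ℝ := fun k => (b * ((k:ℝ) + c)) ^ (-β) with hvdef
  have hxpos : ∀ k : ℕ, (0:ℝ) < (k:ℝ) + c := fun k => by positivity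
  have hbx : ∀ k : ℕ, (0:ℝ) < b * ((k:ℝ) + c) := fun k => by positivity
  have hvpos : ∀ k, 0 < v k := fun k => Real.rpow_pos_of_pos (hbx k) _
  have hvε : ∀ k, v k ≤ ε := by
    intro k
    have h1 : b * c ≤ b * ((k:ℝ) + c) := by nlinarith [Nat.cast_nonneg (α := ℝ) k]
    exact le_trans (rpow_anti β _ _ hβpos.le (by positivity) h1) hv0
  set B : ℝ := b ^ (-β) with hBdef
  have hBpos : 0 < B := Real.rpow_pos_of_pos hbpos _
  have hveq : ∀ k : ℕ, v k = B * ((k:ℝ) + c) ^ (-β) := by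
    intro k
    exact Real.mul_rpow hbpos.le (hxpos k).le
  have hstep : ∀ k : ℕ, v k - a * (v k) ^ α ≤ v (k+1) := by
    intro k
    set x : ℝ := (k:ℝ) + c with hxdef
    have hx : 0 < x := hxpos k
    have hkey := key_rpow_ineq β x hβpos hx
    have h1 : v k = B * x ^ (-β) := hveq k
    have h2 : v (k+1) = B * (x+1) ^ (-β) := by
      rw [hveq (k+1)]
      congr 1
      push_cast; rw [hxdef]; ring
    have h3 : a * (v k) ^ α = β * B * x ^ (-(β+1)) := by
      show a * ((b * x) ^ (-β)) ^ α = β * B * x ^ (-(β+1))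
      rw [← Real.rpow_mul (mul_pos hbpos hx).le, neg_mul, hβα,
        Real.mul_rpow hbpos.le hx.le,
        show -(β+1) = -β + (-1) by ring, Real.rpow_add hbpos, Real.rpow_neg_one]
      have h5 : a * b⁻¹ = β := by rw [← hab, div_eq_mul_inv]
      rw [hBdef, ← h5]; ring
    rw [h3, h1, h2]
    nlinarith [mul_le_mul_of_nonneg_left hkey hBpos.le]
  -- iterates are nonnegative
  have hu : ∀ n, 0 ≤ φ^[n] r := by
    intro n
    induction n with
    | zero => exact hr
    | succ n ih => rw [Function.iterate_succ_apply']; exact hφ_nonneg _ ih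
  -- base point
  have hev : ∀ᶠ n in Filter.atTop, φ^[n] r < v 0 :=
    Filter.Tendsto.eventually_lt_const (hvpos 0) (hφ_iter r hr)
  obtain ⟨n₀, hn₀⟩ := Filter.eventually_atTop.mp hev
  have hcomp : ∀ k, φ^[n₀ + k] r ≤ v k := by
    intro k
    induction k with
    | zero => simpa using (hn₀ n₀ le_rfl).le
    | succ k ih =>
      have hvk_mem : v k ∈ Set.Icc (0:ℝ) ε := ⟨(hvpos k).le, hvε k⟩
      calc φ^[n₀ + (k+1)] r = φ (φ^[n₀ + k] r) := by
            rw [show n₀ + (k+1) = (n₀ + k) + 1 by ring, Function.iterate_succ_apply']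
        _ ≤ φ (v k) := hφ_mono _ _ (hu _) ih
        _ ≤ v k - a * (v k) ^ α := hφ_le _ hvk_mem
        _ ≤ v (k+1) := hstep k
  -- summability
  rw [← summable_nat_add_iff n₀]
  set K : ℝ := ((n₀:ℝ) + 1) ^ γ * B with hKdef
  have hKpos : 0 < K := by positivity
  have hmaj : Summable (fun n : ℕ => K * ((n:ℝ) + 1) ^ (γ - β)) := by
    apply Summable.mul_left
    have h1 : Summable (fun n : ℕ => ((n:ℝ)) ^ (γ - β)) := Real.summable_nat_rpow.mpr hγβ
    have h2 := (summable_nat_add_iff 1).mpr h1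
    apply h2.congr
    intro n
    push_cast
    ring_nf
  apply Summable.of_nonneg_of_le _ _ hmaj
  · intro n
    have := hu (n + n₀)
    positivity
  · intro n
    have hA : ((n:ℝ) + (n₀:ℝ)) ^ γ ≤ ((n:ℝ)+1) ^ γ * ((n₀:ℝ)+1) ^ γ := by
      rw [← Real.mul_rpow (by positivity) (by positivity)]
      apply Real.rpow_le_rpow (by positivity) _ hγ0.le
      nlinarith [Nat.cast_nonneg (α := ℝ) n, Nat.cast_nonneg (α := ℝ) n₀]
    have hB2 : φ^[n + n₀] r ≤ B * ((n:ℝ)+1) ^ (-β) := by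
      have h1 : φ^[n₀ + n] r ≤ v n := hcomp n
      rw [add_comm n n₀] at *
      calc φ^[n₀ + n] r ≤ v n := h1
        _ = B * ((n:ℝ) + c) ^ (-β) := hveq n
        _ ≤ B * ((n:ℝ)+1) ^ (-β) := by
            apply mul_le_mul_of_nonneg_left _ hBpos.le
            exact rpow_anti β _ _ hβpos.le (by positivity) (by linarith)
    calc ((n + n₀ : ℕ):ℝ) ^ γ * φ^[n + n₀] r
        ≤ (((n:ℝ)+1) ^ γ * ((n₀:ℝ)+1) ^ γ) * (B * ((n:ℝ)+1) ^ (-β)) := by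
          push_cast
          exact mul_le_mul hA hB2 (hu _) (by positivity)
      _ = K * ((n:ℝ)+1) ^ (γ - β) := by
          rw [hKdef, show γ - β = γ + (-β) by ring, Real.rpow_add (by positivity : (0:ℝ) < (n:ℝ)+1)]
          ring
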